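/- For the vector field X associated to the system u̇ = -v + h, v̇ = u + h, ẇ = -w + h with h(u,v,w) = a₂v² - a₂w² + 2a₂uv - 2a₂uw, the polynomial F(u,v,w) = w - a₂(v-w)² satisfies XF = -F, so F = 0 is an invariant algebraic surface with cofactor -1. -/

import Mathlib

noncomputable def h2 (a₂ u v w : ℝ) : ℝ :=
  a₂*v^2 - a₂*w^2 + 2*a₂*u*v - 2*a₂*u*w

noncomputable def F2 (a₂ u v w : ℝ) : ℝ :=
  w - a₂*(v - w)^2

/-- F = 0 is an invariant algebraic surface with cofactor -1. -/
theorem stmt_2 : ∀ a₂ u v w : ℝ,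
    (-v + h2 a₂ u v w) * deriv (fun s => F2 a₂ s v w) u
    + (u + h2 a₂ u v w) * deriv (fun s => F2 a₂ u s w) v
    + (-w + h2 a₂ u v w) * deriv (fun s => F2 a₂ u v s) w
    = -F2 a₂ u v w := by
  intro a₂ u v w
  have d1 : deriv (fun s => F2 a₂ s v w) u = 0 := by
    simp [F2]
  have d2 : deriv (fun s => F2 a₂ u s w) v = -a₂*(2*(v-w)) := by
    have : (fun s => F2 a₂ u s w) = fun s => w - a₂*(s - w)^2 := rfl
    rw [this]
    have h' : HasDerivAt (fun s : ℝ => w - a₂*(s - w)^2) (-a₂*(2*(v-w))) v := by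
      have h1 : HasDerivAt (fun s : ℝ => s - w) 1 v := (hasDerivAt_id v).sub_const w
      have h2 : HasDerivAt (fun s : ℝ => (s - w)^2) (2*(v-w)^(2-1)*1) v := h1.pow 2
      have h3 : HasDerivAt (fun s : ℝ => w - a₂*(s - w)^2) (-(a₂ * (2 * (v - w) ^ (2 - 1) * 1))) v := (h2.const_mul a₂).const_sub w
      convert h3 using 1; push_cast; ring
    exact h'.deriv
  have d3 : deriv (fun s => F2 a₂ u v s) w = 1 + a₂*(2*(v-w)) := by
    have h' : HasDerivAt (fun s : ℝ => s - a₂*(v - s)^2) (1 + a₂*(2*(v-w))) w := by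
      have h1 : HasDerivAt (fun s : ℝ => v - s) (-1) w := by
        simpa using (hasDerivAt_id w).const_sub v
      have h2 : HasDerivAt (fun s : ℝ => (v - s)^2) (2*(v-w)^(2-1)*(-1)) w := h1.pow 2
      have h3 : HasDerivAt (fun s : ℝ => s - a₂*(v - s)^2) (1 - a₂ * (2 * (v - w) ^ (2 - 1) * -1)) w := (hasDerivAt_id w).sub (h2.const_mul a₂)
      convert h3 using 1; push_cast; ring
    exact h'.deriv
  rw [d1, d2, d3]
  simp only [h2, F2]
  ring
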